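/- Let f : ℝ^d → ℝ be convex with nonempty set of minimizers X⋆ and minimum value f⋆. Fix α, β > 0 and reals ε, δ, D with δ ≥ 2ε > 0 and D > 0, and set η = ε/(4β). Suppose f_η : ℝ^d → ℝ is convex and differentiable with (α/η)-Lipschitz gradient and satisfies f(x) ≤ f_η(x) ≤ f(x) + βη for all x ∈ ℝ^d. Let (x^(k)) be the iterates of the accelerated method applied to f_η (with smoothness constant α/η) from an initialization x^(0). If f(x^(0)) − f⋆ ≥ δ and dist(x^(0), X⋆) ≤ D, then there exists a natural number k with k ≤ √(16αβD²/(ε(δ − (3/2)ε))) such that f(x^(k)) ≤ f(x^(0)) − ε. -/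

import Mathlib

set_option maxHeartbeats 1000000

open RealInnerProductSpace Set

section Aux
variable {E : Type*} [NormedAddCommGroup E] [InnerProductSpace ℝ E] [CompleteSpace E]

lemma line_hasDerivAt {h : E → ℝ} {h' : E → E} (hg : ∀ z, HasGradientAt h (h' z) z)
    (a dv : E) (t : ℝ) :
    HasDerivAt (fun s : ℝ => h (s • dv + a)) ⟪h' (t • dv + a), dv⟫ t := by
  have hline : HasDerivAt (fun s : ℝ => s • dv + a) dv t := by
    simpa using ((hasDerivAt_id t).smul_const dv).add_const a
  have := (hg (t • dv + a)).hasFDerivAt.comp_hasDerivAt t hline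
  simpa [Function.comp_def] using this

lemma grad_convex_ineq {h : E → ℝ} {h' : E → E} (hc : ConvexOn ℝ Set.univ h)
    (hg : ∀ z, HasGradientAt h (h' z) z) (a b : E) :
    h a + ⟪h' a, b - a⟫ ≤ h b := by
  set φ : ℝ → ℝ := fun s => h (s • (b - a) + a) with hφ
  have hφc : ConvexOn ℝ Set.univ φ := by
    have := hc.comp_affineMap (AffineMap.lineMap a b : ℝ →ᵃ[ℝ] E)
    simpa [φ, Function.comp_def, AffineMap.lineMap_apply_module'] using this
  have hd : HasDerivAt φ ⟪h' ((0:ℝ) • (b - a) + a), b - a⟫ 0 := line_hasDerivAt hg a (b - a) 0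
  have := hφc.le_slope_of_hasDerivAt (mem_univ (0:ℝ)) (mem_univ (1:ℝ)) one_pos hd
  have hslope : slope φ 0 1 = φ 1 - φ 0 := by simp [slope_def_field]
  rw [hslope] at this
  have h0 : φ 0 = h a := by simp [φ]
  have h1 : φ 1 = h b := by simp [φ]
  simp only [zero_smul, zero_add] at this
  rw [h0, h1] at this
  linarith

lemma descent_lemma {h : E → ℝ} {h' : E → E} {L : ℝ} (hL : 0 ≤ L)
    (hg : ∀ z, HasGradientAt h (h' z) z)
    (hlip : ∀ z w, ‖h' z - h' w‖ ≤ L * ‖z - w‖) (a b : E) :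
    h b ≤ h a + ⟪h' a, b - a⟫ + L / 2 * ‖b - a‖ ^ 2 := by
  set dv := b - a with hdv
  set ψ : ℝ → ℝ := fun t => h (t • dv + a) - t * ⟪h' a, dv⟫ - L / 2 * t ^ 2 * ‖dv‖ ^ 2 with hψ
  have hψd : ∀ t : ℝ, HasDerivAt ψ
      (⟪h' (t • dv + a), dv⟫ - ⟪h' a, dv⟫ - L * t * ‖dv‖ ^ 2) t := by
    intro t
    have h1 := line_hasDerivAt hg a dv t
    have h2 : HasDerivAt (fun t : ℝ => t * ⟪h' a, dv⟫) ⟪h' a, dv⟫ t := by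
      simpa using (hasDerivAt_id t).mul_const ⟪h' a, dv⟫
    have h3 : HasDerivAt (fun t : ℝ => L / 2 * t ^ 2 * ‖dv‖ ^ 2) (L * t * ‖dv‖ ^ 2) t := by
      have : HasDerivAt (fun t : ℝ => t ^ 2) (2 * t) t := by
        simpa using hasDerivAt_pow 2 t
      have := (this.const_mul (L / 2)).mul_const (‖dv‖ ^ 2)
      exact this.congr_deriv (by ring)
    exact (h1.sub h2).sub h3
  have hanti : AntitoneOn ψ (Set.Icc (0:ℝ) 1) := by
    apply antitoneOn_of_hasDerivWithinAt_nonpos (convex_Icc 0 1)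
      (fun t _ => (hψd t).continuousAt.continuousWithinAt)
      (fun t ht => ((hψd t).hasDerivWithinAt))
    intro t ht
    rw [interior_Icc] at ht
    have habs : ⟪h' (t • dv + a) - h' a, dv⟫ ≤ L * t * ‖dv‖ ^ 2 := by
      calc ⟪h' (t • dv + a) - h' a, dv⟫ ≤ ‖h' (t • dv + a) - h' a‖ * ‖dv‖ :=
            real_inner_le_norm _ _
        _ ≤ (L * ‖(t • dv + a) - a‖) * ‖dv‖ := by
            apply mul_le_mul_of_nonneg_right (hlip _ _) (norm_nonneg _)
        _ = L * t * ‖dv‖ ^ 2 := by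
            rw [add_sub_cancel_right, norm_smul]
            simp [abs_of_pos ht.1]
            ring
    have : ⟪h' (t • dv + a), dv⟫ - ⟪h' a, dv⟫ = ⟪h' (t • dv + a) - h' a, dv⟫ := by
      rw [inner_sub_left]
    linarith
  have := hanti (Set.left_mem_Icc.2 zero_le_one) (Set.right_mem_Icc.2 zero_le_one) zero_le_one
  simp only [ψ] at this
  simp only [zero_smul, zero_add, one_smul, zero_mul, one_pow, mul_one, zero_pow] at this
  have hb : dv + a = b := by simp [hdv]
  rw [hb] at this
  nlinarith [this]

lemma key_step {h : E → ℝ} {h' : E → E} {L : ℝ} (hc : ConvexOn ℝ Set.univ h)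
    (hg : ∀ z, HasGradientAt h (h' z) z) (hL : 0 < L)
    (hlip : ∀ z w, ‖h' z - h' w‖ ≤ L * ‖z - w‖) (yk u : E) :
    h (yk - (1 / L) • h' yk) - h u ≤
      L / 2 * (‖yk - u‖ ^ 2 - ‖yk - (1 / L) • h' yk - u‖ ^ 2) := by
  set g := h' yk with hgdef
  set p := yk - (1 / L) • g with hpdef
  have hdesc := descent_lemma hL.le hg hlip yk p
  have hpy : p - yk = -((1 / L) • g) := by rw [hpdef]; abel
  have e1 : ⟪g, p - yk⟫ = -(1 / L) * ‖g‖ ^ 2 := by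
    rw [hpy, inner_neg_right, real_inner_smul_right, real_inner_self_eq_norm_sq]; ring
  have e2 : ‖p - yk‖ ^ 2 = (1 / L) ^ 2 * ‖g‖ ^ 2 := by
    rw [hpy, norm_neg, norm_smul]
    rw [Real.norm_eq_abs, abs_of_pos (by positivity), mul_pow]
  have hgi : h yk - h u ≤ ⟪g, yk - u⟫ := by
    have := grad_convex_ineq hc hg yk u
    have hi : ⟪g, u - yk⟫ = -⟪g, yk - u⟫ := by
      rw [← inner_neg_right]; congr 1; abel
    rw [hi] at this; linarith
  have e3 : ‖p - u‖ ^ 2 = ‖yk - u‖ ^ 2 - 2 * (1 / L) * ⟪g, yk - u⟫ + (1 / L) ^ 2 * ‖g‖ ^ 2 := by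
    have : p - u = (yk - u) - (1 / L) • g := by rw [hpdef]; abel
    rw [this, @norm_sub_sq_real, real_inner_smul_right, norm_smul, Real.norm_eq_abs,
      abs_of_pos (show (0:ℝ) < 1 / L by positivity), mul_pow, real_inner_comm]
    ring
  rw [e1, e2] at hdesc
  rw [e3]
  have hL' : L ≠ 0 := hL.ne'
  have expand : L / 2 * (‖yk - u‖ ^ 2 - (‖yk - u‖ ^ 2 - 2 * (1 / L) * ⟪g, yk - u⟫
      + (1 / L) ^ 2 * ‖g‖ ^ 2)) = ⟪g, yk - u⟫ - 1 / (2 * L) * ‖g‖ ^ 2 := by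
    field_simp; ring
  rw [expand]
  have : h yk + -(1 / L) * ‖g‖ ^ 2 + L / 2 * ((1 / L) ^ 2 * ‖g‖ ^ 2)
      = h yk - 1 / (2 * L) * ‖g‖ ^ 2 := by field_simp; ring
  rw [this] at hdesc
  linarith

end Aux

/-- **Decrement guarantee for the smoothing method** (Proposition: smoothing method).
`f` is convex with nonempty minimizer set `Xstar` and minimum value `fstar`.
With `η = ε/(4β)`, the function `fη` is convex, differentiable with `(α/η)`-Lipschitz
gradient, and satisfies `f z ≤ fη z ≤ f z + β·η` for all `z`. Running the accelerated
method on `fη` from `x 0`, if `f (x 0) - fstar ≥ δ ≥ 2ε > 0` and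
`dist (x 0) Xstar ≤ D`, there is `k ≤ √(16αβD²/(ε(δ - (3/2)ε)))` with
`f (x k) ≤ f (x 0) - ε`. -/
theorem smoothing_decrement {d : ℕ} (f : EuclideanSpace ℝ (Fin d) → ℝ)
    (hconv : ConvexOn ℝ Set.univ f)
    (fstar : ℝ) (Xstar : Set (EuclideanSpace ℝ (Fin d)))
    (hXstar : Xstar = {z | f z = fstar})
    (hlb : ∀ z, fstar ≤ f z)
    (hne : Xstar.Nonempty)
    (α β ε δ D : ℝ) (hα : 0 < α) (hβ : 0 < β)
    (hε : 0 < ε) (hδε : δ ≥ 2 * ε) (hD : 0 < D)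
    (η : ℝ) (hη : η = ε / (4 * β))
    (fη : EuclideanSpace ℝ (Fin d) → ℝ)
    (fη' : EuclideanSpace ℝ (Fin d) → EuclideanSpace ℝ (Fin d))
    (hηconv : ConvexOn ℝ Set.univ fη)
    (hηgrad : ∀ z, HasGradientAt fη (fη' z) z)
    (hηlip : ∀ z w, ‖fη' z - fη' w‖ ≤ (α / η) * ‖z - w‖)
    (happrox : ∀ z, f z ≤ fη z ∧ fη z ≤ f z + β * η)
    (x y : ℕ → EuclideanSpace ℝ (Fin d)) (θ : ℕ → ℝ)
    (hθ0 : θ 0 = 1) (hy0 : y 0 = x 0)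
    (hx : ∀ k, x (k + 1) = y k - (1 / (α / η)) • fη' (y k))
    (hθ : ∀ k, θ (k + 1) = (1 + Real.sqrt (1 + 4 * (θ k) ^ 2)) / 2)
    (hy : ∀ k, y (k + 1) = x (k + 1) + ((θ k - 1) / θ (k + 1)) • (x (k + 1) - x k))
    (hgap : f (x 0) - fstar ≥ δ)
    (hdist : Metric.infDist (x 0) Xstar ≤ D) :
    ∃ k : ℕ, (k : ℝ) ≤ Real.sqrt (16 * α * β * D ^ 2 / (ε * (δ - (3 / 2) * ε))) ∧
      f (x k) ≤ f (x 0) - ε := by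
  have hηpos : 0 < η := by rw [hη]; positivity
  set L := α / η with hLdef
  clear_value L
  have hL : 0 < L := hLdef ▸ div_pos hα hηpos
  have hβη : β * η = ε / 4 := by rw [hη]; field_simp
  have hLval : L = 4 * α * β / ε := by rw [hLdef, hη]; field_simp [hε.ne', hβ.ne']
  -- θ facts
  have hθge : ∀ k : ℕ, ((k : ℝ) + 2) / 2 ≤ θ k := by
    intro k
    induction k with
    | zero => rw [hθ0]; norm_num
    | succ n ih =>
      rw [hθ n]
      have hnn : (0:ℝ) ≤ θ n := by
        have : (0:ℝ) ≤ ((n:ℝ) + 2) / 2 := by positivity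
        linarith
      have h2 : 2 * θ n ≤ Real.sqrt (1 + 4 * θ n ^ 2) := by
        calc 2 * θ n = Real.sqrt ((2 * θ n) ^ 2) := (Real.sqrt_sq (by positivity)).symm
          _ ≤ _ := Real.sqrt_le_sqrt (by nlinarith)
      push_cast
      linarith
  have hθpos : ∀ k, 0 < θ k := by
    intro k
    have := hθge k
    have : (0:ℝ) < ((k:ℝ) + 2) / 2 := by positivity
    linarith [hθge k]
  have hθone : ∀ k, 1 ≤ θ k := by
    intro k
    have := hθge k
    have h2 : (1:ℝ) ≤ ((k:ℝ) + 2) / 2 := by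
      have : (0:ℝ) ≤ (k:ℝ) := Nat.cast_nonneg k
      linarith
    linarith
  have hθsq : ∀ k, θ (k + 1) * (θ (k + 1) - 1) = θ k ^ 2 := by
    intro k
    rw [hθ k]
    have hs : Real.sqrt (1 + 4 * θ k ^ 2) ^ 2 = 1 + 4 * θ k ^ 2 :=
      Real.sq_sqrt (by positivity)
    nlinarith [hs]
  -- the minimizer
  have hfcont : Continuous f := by
    have h := hconv.continuousOn isOpen_univ
    rw [← continuousOn_univ]
    exact h
  have hXclosed : IsClosed Xstar := by
    rw [hXstar]
    exact isClosed_eq hfcont continuous_const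
  obtain ⟨xs, hxsX, hxsd⟩ := hXclosed.exists_infDist_eq_dist hne (x 0)
  have hfxs : f xs = fstar := by rw [hXstar] at hxsX; exact hxsX
  have hDxs : ‖x 0 - xs‖ ≤ D := by
    rw [← dist_eq_norm, ← hxsd]; exact hdist
  -- key step inequality
  have key : ∀ (k : ℕ) (u : EuclideanSpace ℝ (Fin d)),
      fη (x (k + 1)) - fη u ≤ L / 2 * (‖y k - u‖ ^ 2 - ‖x (k + 1) - u‖ ^ 2) := by
    intro k u
    rw [hx k]
    exact key_step hηconv hηgrad hL hηlip (y k) u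
  -- telescoping
  have tele : ∀ K : ℕ, θ K ^ 2 * (fη (x (K + 1)) - fη xs)
      + L / 2 * ‖θ K • x (K + 1) - (θ K - 1) • x K - xs‖ ^ 2 ≤ L / 2 * ‖x 0 - xs‖ ^ 2 := by
    intro K
    induction K with
    | zero =>
      have h0 := key 0 xs
      rw [hy0] at h0
      simp only [hθ0, one_pow, one_mul, one_smul, sub_self, zero_smul, sub_zero, zero_add] at h0 ⊢
      linarith [h0]
    | succ K ih =>
      have hθne : θ (K + 1) ≠ 0 := (hθpos (K + 1)).ne'
      have hinv : θ (K + 1) * (θ (K + 1))⁻¹ = 1 := mul_inv_cancel₀ hθne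
      set u := (1 - (θ (K + 1))⁻¹) • x (K + 1) + (θ (K + 1))⁻¹ • xs with hu
      have htinv0 : (0:ℝ) ≤ (θ (K + 1))⁻¹ := inv_nonneg.2 (hθpos _).le
      have htinv1 : (θ (K + 1))⁻¹ ≤ 1 := by
        rw [← one_div, div_le_one (hθpos (K + 1))]
        exact hθone (K + 1)
      have hcomb : fη u ≤ (1 - (θ (K + 1))⁻¹) * fη (x (K + 1)) + (θ (K + 1))⁻¹ * fη xs :=
        hηconv.2 (mem_univ _) (mem_univ _) (by linarith) htinv0 (by ring)
      have hk := key (K + 1) u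
      have hv1 : θ (K + 1) • (y (K + 1) - u) = θ K • x (K + 1) - (θ K - 1) • x K - xs := by
        rw [hy K, hu]
        match_scalars <;> field_simp [hθne] <;> ring
      have hv2 : θ (K + 1) • (x (K + 2) - u)
          = θ (K + 1) • x (K + 2) - (θ (K + 1) - 1) • x (K + 1) - xs := by
        rw [hu]
        match_scalars <;> field_simp [hθne]
      have hn1 : θ (K + 1) ^ 2 * ‖y (K + 1) - u‖ ^ 2
          = ‖θ K • x (K + 1) - (θ K - 1) • x K - xs‖ ^ 2 := by
        rw [← hv1, norm_smul, Real.norm_eq_abs, mul_pow, sq_abs]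
      have hn2 : θ (K + 1) ^ 2 * ‖x (K + 2) - u‖ ^ 2
          = ‖θ (K + 1) • x (K + 2) - (θ (K + 1) - 1) • x (K + 1) - xs‖ ^ 2 := by
        rw [← hv2, norm_smul, Real.norm_eq_abs, mul_pow, sq_abs]
      have hcomb2 : θ (K + 1) ^ 2 * fη u
          ≤ θ K ^ 2 * fη (x (K + 1)) + θ (K + 1) * fη xs := by
        have h1 := mul_le_mul_of_nonneg_left hcomb (sq_nonneg (θ (K + 1)))
        have e : θ (K + 1) ^ 2 * ((1 - (θ (K + 1))⁻¹) * fη (x (K + 1))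
            + (θ (K + 1))⁻¹ * fη xs) = θ K ^ 2 * fη (x (K + 1)) + θ (K + 1) * fη xs := by
          linear_combination (θ (K + 1) * fη xs - θ (K + 1) * fη (x (K + 1))) * hinv
            + fη (x (K + 1)) * hθsq K
        rw [e] at h1
        exact h1
      have hsplit : θ (K + 1) ^ 2 * fη xs = θ (K + 1) * fη xs + θ K ^ 2 * fη xs := by
        linear_combination fη xs * hθsq K
      have m1 := mul_le_mul_of_nonneg_left hk (sq_nonneg (θ (K + 1)))
      have expand : θ (K + 1) ^ 2 * (L / 2 * (‖y (K + 1) - u‖ ^ 2 - ‖x (K + 2) - u‖ ^ 2))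
          = L / 2 * (θ (K + 1) ^ 2 * ‖y (K + 1) - u‖ ^ 2)
            - L / 2 * (θ (K + 1) ^ 2 * ‖x (K + 2) - u‖ ^ 2) := by ring
      rw [expand, hn1, hn2] at m1
      linarith [m1, hcomb2, ih, hsplit]
  -- rate
  have rate : ∀ K : ℕ, fη (x (K + 1)) ≤ fη xs + L / 2 * ‖x 0 - xs‖ ^ 2 / θ K ^ 2 := by
    intro K
    have h := tele K
    have hp : (0:ℝ) < θ K ^ 2 := pow_pos (hθpos K) 2
    have hnn : (0:ℝ) ≤ L / 2 * ‖θ K • x (K + 1) - (θ K - 1) • x K - xs‖ ^ 2 := by positivity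
    have h2 : θ K ^ 2 * (fη (x (K + 1)) - fη xs) ≤ L / 2 * ‖x 0 - xs‖ ^ 2 := by linarith
    have h3 : fη (x (K + 1)) - fη xs ≤ L / 2 * ‖x 0 - xs‖ ^ 2 / θ K ^ 2 := by
      rw [le_div_iff₀ hp]
      linarith [h2]
    linarith
  -- approximate gradient norm bound at xs
  have hup : fη xs ≤ fstar + ε / 4 := by
    have := (happrox xs).2
    rw [hfxs, hβη] at this
    exact this
  have hgs : ‖fη' xs‖ ^ 2 ≤ 2 * α * β := by
    set gs := fη' xs with hgsdef
    have hd := descent_lemma hL.le hηgrad hηlip xs (xs - (1 / L) • gs)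
    have hvec : (xs - (1 / L) • gs) - xs = -((1 / L) • gs) := by abel
    have e1 : ⟪gs, (xs - (1 / L) • gs) - xs⟫ = -(1 / L) * ‖gs‖ ^ 2 := by
      rw [hvec, inner_neg_right, real_inner_smul_right, real_inner_self_eq_norm_sq]; ring
    have e2 : ‖(xs - (1 / L) • gs) - xs‖ ^ 2 = (1 / L) ^ 2 * ‖gs‖ ^ 2 := by
      rw [hvec, norm_neg, norm_smul, Real.norm_eq_abs, abs_of_pos (by positivity), mul_pow]
    rw [e1, e2] at hd
    have hlow : fstar ≤ fη (xs - (1 / L) • gs) :=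
      le_trans (hlb _) (happrox _).1
    have hcalc : fη xs + -(1 / L) * ‖gs‖ ^ 2 + L / 2 * ((1 / L) ^ 2 * ‖gs‖ ^ 2)
        = fη xs - ‖gs‖ ^ 2 / (2 * L) := by field_simp; ring
    rw [hcalc] at hd
    have h4 : ‖gs‖ ^ 2 / (2 * L) ≤ ε / 4 := by linarith
    have h5 : ‖gs‖ ^ 2 ≤ 2 * L * (ε / 4) := by
      rw [div_le_iff₀ (by positivity)] at h4
      linarith [h4]
    rw [hLval] at h5
    have : 2 * (4 * α * β / ε) * (ε / 4) = 2 * α * β := by field_simp [hε.ne']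
    rw [this] at h5
    exact h5
  -- upper bound on δ
  have hub : δ ≤ ε / 4 + ‖fη' xs‖ * D + L / 2 * D ^ 2 := by
    have hd := descent_lemma hL.le hηgrad hηlip xs (x 0)
    have h1 : ⟪fη' xs, x 0 - xs⟫ ≤ ‖fη' xs‖ * D :=
      le_trans (real_inner_le_norm _ _) (mul_le_mul_of_nonneg_left hDxs (norm_nonneg _))
    have h2 : L / 2 * ‖x 0 - xs‖ ^ 2 ≤ L / 2 * D ^ 2 := by
      have hsq : ‖x 0 - xs‖ ^ 2 ≤ D ^ 2 := pow_le_pow_left₀ (norm_nonneg _) hDxs 2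
      nlinarith [hL]
    have h3 : f (x 0) ≤ fη (x 0) := (happrox _).1
    linarith
  -- arithmetic setup
  have hden : (0:ℝ) < δ - 3 / 2 * ε := by linarith
  have hδpos : (0:ℝ) < δ := by linarith
  set Q := 16 * α * β * D ^ 2 / (ε * (δ - 3 / 2 * ε)) with hQdef
  have hQpos : 0 < Q := div_pos (by positivity) (mul_pos hε hden)
  set Kr := Real.sqrt Q with hKrdef
  have hKr2 : Kr ^ 2 = Q := Real.sq_sqrt hQpos.le
  have hKrnn : 0 ≤ Kr := Real.sqrt_nonneg _
  have hK1 : 1 ≤ Kr := by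
    by_contra hcon
    push_neg at hcon
    have hQ1 : Q < 1 := by
      rw [← hKr2]; nlinarith
    have hnum : 16 * α * β * D ^ 2 < ε * (δ - 3 / 2 * ε) := by
      rw [hQdef, div_lt_one (mul_pos hε hden)] at hQ1
      exact hQ1
    have h16 : 16 * α * β * D ^ 2 < ε * δ := by nlinarith [hnum, hε, sq_nonneg ε]
    have hquart : 4 * α * β * D ^ 2 / ε < δ / 4 := by
      rw [div_lt_div_iff₀ hε (by norm_num : (0:ℝ) < 4)]
      nlinarith [h16]
    have hA : L / 2 * D ^ 2 < δ / 8 := by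
      have e : L / 2 * D ^ 2 = 4 * α * β * D ^ 2 / ε / 2 := by rw [hLval]; ring
      rw [e]
      linarith [hquart]
    have hB : ‖fη' xs‖ * D < δ / 4 := by
      have hsq : (‖fη' xs‖ * D) ^ 2 < (δ / 4) ^ 2 := by
        nlinarith [mul_le_mul_of_nonneg_right hgs (sq_nonneg D), hnum, hδε, hε, sq_nonneg ε,
          mul_nonneg (sub_nonneg.2 hδε) hδpos.le]
      exact lt_of_pow_lt_pow_left₀ 2 (by positivity) hsq
    linarith [hub, hA, hB]
  refine ⟨⌊Kr⌋₊, Nat.floor_le hKrnn, ?_⟩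
  have hk1 : 1 ≤ ⌊Kr⌋₊ := Nat.le_floor (by exact_mod_cast hK1)
  obtain ⟨m, hm⟩ : ∃ m, ⌊Kr⌋₊ = m + 1 := ⟨⌊Kr⌋₊ - 1, by omega⟩
  rw [hm]
  have hrate := rate m
  have hθm : ((m : ℝ) + 2) / 2 ≤ θ m := hθge m
  have hKlt : Kr < (m : ℝ) + 2 := by
    have h := Nat.lt_floor_add_one Kr
    rw [hm] at h
    push_cast at h
    linarith
  have hθmpos : 0 < θ m := hθpos m
  have hQ4 : Q / 4 < θ m ^ 2 := by
    have h1 : Kr / 2 < θ m := by linarith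
    nlinarith [hKrnn, hKr2]
  have hQval : Q = 4 * (L * D ^ 2) / (δ - 3 / 2 * ε) := by
    rw [hQdef, hLval]
    field_simp [hε.ne', hden.ne']
    ring
  have hcore : L * D ^ 2 / (δ - 3 / 2 * ε) < θ m ^ 2 := by
    have e : Q / 4 = L * D ^ 2 / (δ - 3 / 2 * ε) := by rw [hQval]; ring
    rw [e] at hQ4
    exact hQ4
  have hdivlt : L / 2 * D ^ 2 / θ m ^ 2 < (δ - 3 / 2 * ε) / 2 := by
    rw [div_lt_div_iff₀ (by positivity) (by norm_num : (0:ℝ) < 2)]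
    have := (div_lt_iff₀ hden).mp hcore
    nlinarith [this]
  have hmono : L / 2 * ‖x 0 - xs‖ ^ 2 / θ m ^ 2 ≤ L / 2 * D ^ 2 / θ m ^ 2 := by
    have h2 : ‖x 0 - xs‖ ^ 2 ≤ D ^ 2 := pow_le_pow_left₀ (norm_nonneg _) hDxs 2
    gcongr
  have hfin : f (x (m + 1)) ≤ fη (x (m + 1)) := (happrox _).1
  have : f (x 0) - fstar ≥ δ := hgap
  linarith [hrate, hup, hdivlt, hmono, hfin, hδε]
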